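/- Let G be a group, N ⊴ G of finite index, k algebraically closed of characteristic p with p ∤ [G:N], and L an irreducible finite-dimensional N-representation whose stabilizer is all of G. Then the twisted group algebra 𝒜 ≅ End_G(Ind_N^G(L))^{op} is a semisimple k-algebra. -/

import Mathlib

section CliffordDefs

variable {k G V : Type*} [Field k] [Group G] [AddCommGroup V] [Module k V]

/-- A `k`-submodule `W` is stable under the elements of `S` acting through `ρ`. -/
def repStable (ρ : Representation k G V) (S : Set G) (W : Submodule k V) : Prop :=
  ∀ g ∈ S, ∀ v ∈ W, ρ g v ∈ W

/-- The representation `ρ` is irreducible (simple). -/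
def repIrreducible (ρ : Representation k G V) : Prop :=
  Nontrivial V ∧ ∀ W : Submodule k V, repStable ρ Set.univ W → W = ⊥ ∨ W = ⊤

end CliffordDefs

open Module

set_option linter.unusedSectionVars false
set_option linter.unusedVariables false
set_option maxHeartbeats 1600000

section AbstractWedderburn


set_option linter.unusedSectionVars false

section Schur

variable {k B S T : Type*} [Field k] [IsAlgClosed k] [Ring B] [Algebra k B]
  [AddCommGroup S] [Module B S] [Module k S] [IsScalarTower k B S] [SMulCommClass B k S]
  [AddCommGroup T] [Module B T] [Module k T] [IsScalarTower k B T] [SMulCommClass B k T]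

noncomputable def homRestrict : (S →ₗ[B] T) →ₗ[k] (S →ₗ[k] T) where
  toFun f := f.restrictScalars k
  map_add' _ _ := rfl
  map_smul' _ _ := rfl

lemma homRestrict_inj : Function.Injective (homRestrict (k := k) (B := B) (S := S) (T := T)) :=
  fun f g h => by ext x; exact congrArg (fun (φ : S →ₗ[k] T) => φ x) h

lemma findim_hom [FiniteDimensional k S] [FiniteDimensional k T] :
    FiniteDimensional k (S →ₗ[B] T) :=
  FiniteDimensional.of_injective homRestrict homRestrict_inj

lemma schur_exists_smul_id [IsSimpleModule B S] [FiniteDimensional k S]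
    (φ : S →ₗ[B] S) : ∃ c : k, φ = c • (LinearMap.id : S →ₗ[B] S) := by
  classical
  letI : DivisionRing (Module.End B S) := Module.End.instDivisionRing
  haveI : FiniteDimensional k (Module.End B S) := findim_hom
  haveI : Algebra.IsIntegral k (Module.End B S) := Algebra.IsIntegral.of_finite _ _
  obtain ⟨c, hc⟩ := (IsAlgClosed.algebraMap_bijective_of_isIntegral
    (k := k) (K := Module.End B S)).2 φ
  exact ⟨c, by rw [← hc, Module.algebraMap_end_eq_smul_id]⟩

end Schur

section HomCongr

variable {k B M M' T : Type*} [Field k] [Ring B] [Algebra k B]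
  [AddCommGroup M] [Module B M] [AddCommGroup M'] [Module B M']
  [AddCommGroup T] [Module B T] [Module k T] [SMulCommClass B k T]

/-- Composition with a `B`-linear equivalence on the domain, as a `k`-linear equivalence of
hom-spaces. -/
noncomputable def homCongrLeft (e : M ≃ₗ[B] M') : (M →ₗ[B] T) ≃ₗ[k] (M' →ₗ[B] T) where
  toFun f := f ∘ₗ (e.symm : M' →ₗ[B] M)
  invFun f := f ∘ₗ (e : M →ₗ[B] M')
  map_add' f g := by ext; simp
  map_smul' c f := by ext; simp
  left_inv f := by ext x; simp
  right_inv f := by ext x; simp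

end HomCongr

section Wedderburn

variable {k B : Type*} [Field k] [IsAlgClosed k] [Ring B] [Algebra k B]
  [FiniteDimensional k B] [IsSemisimpleRing B]

theorem wedderburn_algClosed : ∃ (r : ℕ) (n : Fin r → ℕ),
    Nonempty (B ≃ₐ[k] Π i : Fin r, Matrix (Fin (n i)) (Fin (n i)) k) := by
  classical
  haveI : IsNoetherian B B := isNoetherian_of_tower k inferInstance
  obtain ⟨s, hfin, hind, htop, hsimple⟩ :=
    ((IsSemisimpleModule.finite_tfae (R := B) (M := B)).out 1 4).mp ‹IsNoetherian B B›
  haveI := hfin.to_subtype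
  haveI : Fintype ↥s := Fintype.ofFinite _
  haveI hsimp : ∀ j : ↥s, IsSimpleModule B ↥(j : Submodule B B) := fun j => hsimple j j.2
  -- basic instances on submodules
  haveI hSMC : ∀ p : Submodule B B, SMulCommClass B k ↥p := fun p =>
    ⟨fun b c x => Subtype.ext <| by
      change b • (c • (x : B)) = c • (b • (x : B))
      simp [smul_eq_mul, Algebra.mul_smul_comm]⟩
  haveI hFD : ∀ p : Submodule B B, FiniteDimensional k ↥p := fun p =>
    FiniteDimensional.of_injective ((p.subtype).restrictScalars k) p.injective_subtype
  -- the setoid of isomorphism classes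
  let sd : Setoid ↥s :=
    ⟨fun j j' => Nonempty ((↥(j : Submodule B B)) ≃ₗ[B] ↥(j' : Submodule B B)),
      ⟨fun _ => ⟨LinearEquiv.refl B _⟩, fun ⟨e⟩ => ⟨e.symm⟩, fun ⟨e⟩ ⟨f⟩ => ⟨e.trans f⟩⟩⟩
  let Q := Quotient sd
  haveI : Fintype Q := Quotient.fintype sd
  let eqv : Fin (Fintype.card Q) ≃ Q := (Fintype.equivFin Q).symm
  let S : Fin (Fintype.card Q) → Submodule B B := fun i => ((eqv i).out : Submodule B B)
  haveI hsimpS : ∀ i, IsSimpleModule B ↥(S i) := fun i => hsimp _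
  let cl : ↥s → Fin (Fintype.card Q) := fun j => eqv.symm (Quotient.mk sd j)
  have iso_j : ∀ j : ↥s, Nonempty ((↥(j : Submodule B B)) ≃ₗ[B] ↥(S (cl j))) := by
    intro j
    have h1 : eqv (cl j) = Quotient.mk sd j := Equiv.apply_symm_apply _ _
    have h2 : sd.r (eqv (cl j)).out j := by
      rw [h1]; exact Quotient.exact (Quotient.out_eq _)
    exact ⟨h2.some.symm⟩
  have cl_eq : ∀ (j : ↥s) i, Nonempty ((↥(j : Submodule B B)) ≃ₗ[B] ↥(S i)) → cl j = i := by
    intro j i ⟨e⟩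
    have h1 : Quotient.mk sd j = Quotient.mk sd (eqv i).out := Quotient.sound ⟨e⟩
    show eqv.symm _ = i
    rw [h1, Quotient.out_eq]
    exact eqv.symm_apply_apply i
  -- the representation map
  let Φ : B →ₐ[k] Π i, Module.End k ↥(S i) :=
    Pi.algHom _ _ fun i => Algebra.lsmul k k ↥(S i)
  have hΦ : ∀ (b : B) i (x : ↥(S i)), Φ b i x = b • x := fun _ _ _ => rfl
  -- injectivity
  have hinj : Function.Injective Φ := by
    rw [injective_iff_map_eq_zero]
    intro b hb
    have hT : ∀ (j : ↥s), ∀ x : ↥(j : Submodule B B), b • x = 0 := by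
      intro j x
      obtain ⟨e⟩ := iso_j j
      have h0 : Φ b (cl j) (e x) = 0 := by rw [hb]; rfl
      rw [hΦ] at h0
      apply e.injective
      rw [map_smul, h0, map_zero]
    have hall : ∀ x : B, b * x = 0 := by
      intro x
      have hx : x ∈ (⨆ j : ↥s, (j : Submodule B B)) := by
        rw [← sSup_eq_iSup', htop]; trivial
      refine Submodule.iSup_induction (motive := fun y => b * y = 0) _ hx ?_ (by simp) ?_
      · intro j y hy
        simpa using congrArg (Subtype.val) (hT j ⟨y, hy⟩)
      · intro y z hy hz; rw [mul_add, hy, hz, add_zero]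
    simpa using hall 1
  -- internal direct sum decomposition of B
  have hIndep : iSupIndep (fun j : ↥s => (j : Submodule B B)) := (sSupIndep_iff s).mp hind
  have hInt : DirectSum.IsInternal (fun j : ↥s => (j : Submodule B B)) :=
    DirectSum.isInternal_submodule_of_iSupIndep_of_iSup_eq_top hIndep
      (by rw [← sSup_eq_iSup', htop])
  let gB : B ≃ₗ[B] Π j : ↥s, ↥(j : Submodule B B) :=
    (LinearEquiv.ofBijective (DirectSum.coeLinearMap _) hInt).symm.trans
      (DirectSum.linearEquivFunOnFintype B ↥s _)
  -- dimension of B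
  have hdimB : finrank k B = ∑ j : ↥s, finrank k ↥(j : Submodule B B) := by
    rw [(gB.restrictScalars k).finrank_eq, Module.finrank_pi_fintype]
  -- Schur: endomorphism algebras are 1-dimensional
  have hdimEnd : ∀ i, finrank k (↥(S i) →ₗ[B] ↥(S i)) = 1 := by
    intro i
    haveI : Nontrivial ↥(S i) := IsSimpleModule.nontrivial B ↥(S i)
    refine finrank_eq_one (LinearMap.id : ↥(S i) →ₗ[B] ↥(S i)) ?_ ?_
    · intro h
      obtain ⟨x, hx⟩ := exists_ne (0 : ↥(S i))
      exact hx (by simpa using congrArg (fun (φ : ↥(S i) →ₗ[B] ↥(S i)) => φ x) h)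
    · intro φ
      obtain ⟨c, hc⟩ := schur_exists_smul_id (k := k) φ
      exact ⟨c, hc.symm⟩
  -- Hom spaces between non-isomorphic simples vanish
  have hdimHom : ∀ (j : ↥s) i, finrank k (↥(j : Submodule B B) →ₗ[B] ↥(S i)) =
      if cl j = i then 1 else 0 := by
    intro j i
    by_cases h : cl j = i
    · subst h
      obtain ⟨e⟩ := iso_j j
      rw [if_pos rfl, (homCongrLeft (k := k) e : _ ≃ₗ[k] _).finrank_eq]
      exact hdimEnd (cl j)
    · rw [if_neg h]
      haveI : Subsingleton (↥(j : Submodule B B) →ₗ[B] ↥(S i)) := by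
        constructor
        intro f g
        rcases f.bijective_or_eq_zero with hf | hf
        · exact absurd (cl_eq j i ⟨LinearEquiv.ofBijective f hf⟩) h
        · rcases g.bijective_or_eq_zero with hg | hg
          · exact absurd (cl_eq j i ⟨LinearEquiv.ofBijective g hg⟩) h
          · rw [hf, hg]
      exact Module.finrank_zero_of_subsingleton
  -- counting multiplicities
  have hmult : ∀ i, finrank k ↥(S i) = (Finset.univ.filter fun j : ↥s => cl j = i).card := by
    intro i
    have e1 : (B →ₗ[B] ↥(S i)) ≃ₗ[k] ↥(S i) := LinearMap.ringLmapEquivSelf B k ↥(S i)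
    have e2 : (B →ₗ[B] ↥(S i)) ≃ₗ[k] ((Π j : ↥s, ↥(j : Submodule B B)) →ₗ[B] ↥(S i)) :=
      homCongrLeft (k := k) gB
    have e3 : ((Π j : ↥s, ↥(j : Submodule B B)) →ₗ[B] ↥(S i)) ≃ₗ[k]
        Π j : ↥s, (↥(j : Submodule B B) →ₗ[B] ↥(S i)) :=
      (LinearMap.lsum B (fun j : ↥s => ↥(j : Submodule B B)) k).symm
    rw [← e1.finrank_eq, e2.finrank_eq, e3.finrank_eq, Module.finrank_pi_fintype]
    rw [Finset.card_filter]
    exact Finset.sum_congr rfl fun j _ => hdimHom j i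
  have hjn : ∀ j : ↥s, finrank k ↥(j : Submodule B B) = finrank k ↥(S (cl j)) := by
    intro j; obtain ⟨e⟩ := iso_j j; exact (e.restrictScalars k).finrank_eq
  have hdim2 : finrank k B = ∑ i, finrank k ↥(S i) * finrank k ↥(S i) := by
    rw [hdimB, ← Finset.sum_fiberwise Finset.univ cl (fun j => finrank k ↥(j : Submodule B B))]
    refine Finset.sum_congr rfl fun i _ => ?_
    have : ∀ j ∈ Finset.univ.filter (fun j : ↥s => cl j = i),
        finrank k ↥(j : Submodule B B) = finrank k ↥(S i) := by
      intro j hj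
      rw [hjn j, (Finset.mem_filter.mp hj).2]
    rw [Finset.sum_congr rfl this, Finset.sum_const, ← hmult i, smul_eq_mul]
  have hdimT : finrank k (Π i, Module.End k ↥(S i)) =
      ∑ i, finrank k ↥(S i) * finrank k ↥(S i) := by
    rw [Module.finrank_pi_fintype]
    exact Finset.sum_congr rfl fun i _ => Module.finrank_linearMap k k ↥(S i) ↥(S i)
  have hsurj : Function.Surjective Φ :=
    (LinearMap.injective_iff_surjective_of_finrank_eq_finrank
      (f := Φ.toLinearMap) (hdim2.trans hdimT.symm)).mp hinj
  exact ⟨Fintype.card Q, fun i => finrank k ↥(S i),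
    ⟨(AlgEquiv.ofBijective Φ ⟨hinj, hsurj⟩).trans
      (AlgEquiv.piCongrRight fun i => algEquivMatrix (finBasis k ↥(S i)))⟩⟩

end Wedderburn

end AbstractWedderburn

section Twisted

variable {k A : Type*} [Field k] [Group A] [Fintype A] [DecidableEq A]

/-- A normalized 2-cocycle with values in `kˣ`. -/
structure NCocycle (k A : Type*) [Field k] [Group A] where
  α : A → A → kˣ
  cocycle : ∀ a b c, α a b * α (a * b) c = α b c * α a (b * c)
  one_left : ∀ b, α 1 b = 1
  one_right : ∀ a, α a 1 = 1

/-- The twisted group algebra: functions `A → k` with `α`-twisted convolution. -/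
def Tw {k A : Type*} [Field k] [Group A] (c : NCocycle k A) : Type _ := A → k

namespace Tw

variable (c : NCocycle k A)

instance : AddCommGroup (Tw c) := Pi.addCommGroup
instance : Module k (Tw c) := Pi.module _ _ _

instance : Mul (Tw c) :=
  ⟨fun x y => fun d => ∑ a : A, (c.α a (a⁻¹ * d) : k) * x a * y (a⁻¹ * d)⟩

instance : One (Tw c) := ⟨fun d => if d = 1 then 1 else 0⟩

lemma mul_def (x y : Tw c) (d : A) :
    (x * y) d = ∑ a : A, (c.α a (a⁻¹ * d) : k) * x a * y (a⁻¹ * d) := rfl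

lemma one_def (d : A) : (1 : Tw c) d = if d = 1 then 1 else 0 := rfl

lemma smul_def (r : k) (x : Tw c) (d : A) : (r • x) d = r * x d := rfl

lemma add_def (x y : Tw c) (d : A) : (x + y) d = x d + y d := rfl

lemma zero_def (d : A) : (0 : Tw c) d = 0 := rfl

variable {c}

lemma cocycle_k (a b d : A) :
    (c.α a b : k) * (c.α (a * b) d : k) = (c.α b d : k) * (c.α a (b * d) : k) := by
  have := congrArg Units.val (c.cocycle a b d)
  push_cast at this
  exact this

lemma mul_assoc' (x y z : Tw c) : x * y * z = x * (y * z) := by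
  funext d
  have L : (x * y * z) d = ∑ a : A, ∑ e : A,
      ((c.α a (a⁻¹ * d) : k) * ((c.α e (e⁻¹ * a) : k) * x e * y (e⁻¹ * a))) * z (a⁻¹ * d) := by
    rw [mul_def]
    refine Finset.sum_congr rfl fun a _ => ?_
    rw [mul_def c x y a, Finset.mul_sum, Finset.sum_mul]
  have R : (x * (y * z)) d = ∑ e : A, ∑ f : A,
      (c.α e (e⁻¹ * d) : k) * x e *
        ((c.α f (f⁻¹ * (e⁻¹ * d)) : k) * y f * z (f⁻¹ * (e⁻¹ * d))) := by
    rw [mul_def]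
    refine Finset.sum_congr rfl fun e _ => ?_
    rw [mul_def c y z (e⁻¹ * d), Finset.mul_sum]
  rw [L, R, Finset.sum_comm]
  refine Finset.sum_congr rfl fun e _ => ?_
  refine Fintype.sum_equiv (Equiv.mulLeft e⁻¹) _ _ ?_
  intro a
  show ((c.α a (a⁻¹ * d) : k) * ((c.α e (e⁻¹ * a) : k) * x e * y (e⁻¹ * a))) * z (a⁻¹ * d) =
    (c.α e (e⁻¹ * d) : k) * x e *
      ((c.α (e⁻¹ * a) ((e⁻¹ * a)⁻¹ * (e⁻¹ * d)) : k) * y (e⁻¹ * a) * z ((e⁻¹ * a)⁻¹ * (e⁻¹ * d)))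
  have h2 : (e⁻¹ * a)⁻¹ * (e⁻¹ * d) = a⁻¹ * d := by group
  rw [h2]
  have key := cocycle_k (c := c) e (e⁻¹ * a) (a⁻¹ * d)
  rw [mul_inv_cancel_left] at key
  have h4 : (e⁻¹ * a) * (a⁻¹ * d) = e⁻¹ * d := by group
  rw [h4] at key
  linear_combination x e * y (e⁻¹ * a) * z (a⁻¹ * d) * key

lemma one_mul' (x : Tw c) : 1 * x = x := by
  funext d
  rw [mul_def]
  rw [Finset.sum_eq_single 1]
  · have h1 : (c.α 1 d : k) = 1 := by rw [c.one_left]; rfl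
    simp [one_def, h1]
  · intro a _ ha
    simp [one_def, ha]
  · simp

lemma mul_one' (x : Tw c) : x * 1 = x := by
  funext d
  rw [mul_def]
  rw [Finset.sum_eq_single d]
  · have h1 : (c.α d 1 : k) = 1 := by rw [c.one_right]; rfl
    simp [one_def, h1]
  · intro a _ ha
    have : a⁻¹ * d ≠ 1 := fun h => ha (inv_mul_eq_one.mp h)
    simp [one_def, this]
  · simp

instance : Ring (Tw c) :=
  { (inferInstance : AddCommGroup (Tw c)), (inferInstance : Mul (Tw c)),
    (inferInstance : One (Tw c)) with
    mul_assoc := mul_assoc'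
    one_mul := one_mul'
    mul_one := mul_one'
    left_distrib := fun x y z => by
      funext d; simp only [mul_def, add_def, mul_add, Finset.sum_add_distrib]
    right_distrib := fun x y z => by
      funext d
      simp only [mul_def, add_def, add_mul, mul_add, Finset.sum_add_distrib]
    zero_mul := fun x => by funext d; simp [mul_def, zero_def]
    mul_zero := fun x => by funext d; simp [mul_def, zero_def] }

instance : Algebra k (Tw c) :=
  Algebra.ofModule
    (fun r x y => by
      funext d
      simp only [mul_def, smul_def, Finset.mul_sum]
      exact Finset.sum_congr rfl fun a _ => by ring)
    (fun r x y => by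
      funext d
      simp only [mul_def, smul_def, Finset.mul_sum]
      exact Finset.sum_congr rfl fun a _ => by ring)

instance : FiniteDimensional k (Tw c) := inferInstanceAs (FiniteDimensional k (A → k))

variable (c)

/-- The canonical basis elements of the twisted group algebra. -/
def δ (a : A) : Tw c := fun d => if d = a then 1 else 0

variable {c}

lemma one_eq_δ : (1 : Tw c) = δ c 1 := rfl

lemma δ_mul (a b : A) : δ c a * δ c b = (c.α a b : k) • δ c (a * b) := by
  funext d
  rw [mul_def, Finset.sum_eq_single a]
  · by_cases h : d = a * b
    · have h1 : a⁻¹ * d = b := by rw [h]; group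
      simp [δ, smul_def, h1, h]
    · have h1 : a⁻¹ * d ≠ b := fun hh => h (by rw [← hh]; group)
      simp [δ, smul_def, h1, h]
  · intro a' _ ha'
    simp [δ, ha']
  · simp

/-- Evaluation at a point, as an additive monoid hom. -/
def evalHom (d : A) : Tw c →+ k where
  toFun x := x d
  map_zero' := rfl
  map_add' _ _ := rfl

lemma sum_apply {ι : Type*} (s : Finset ι) (f : ι → Tw c) (d : A) :
    (∑ i ∈ s, f i) d = ∑ i ∈ s, f i d := map_sum (evalHom d) f s

lemma eq_sum_δ (x : Tw c) : x = ∑ a : A, x a • δ c a := by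
  funext d
  rw [sum_apply, Finset.sum_eq_single d]
  · simp [δ, smul_def]
  · intro a _ ha; simp [δ, smul_def, Ne.symm ha]
  · simp

lemma alpha_inv (a : A) : c.α a⁻¹ a = c.α a a⁻¹ := by
  have := c.cocycle a a⁻¹ a
  rw [mul_inv_cancel, inv_mul_cancel, c.one_left, c.one_right, mul_one, mul_one] at this
  exact this.symm

variable (c)

/-- The basis elements as units. -/
noncomputable def uu (a : A) : (Tw c)ˣ where
  val := δ c a
  inv := ((c.α a a⁻¹ : k)⁻¹) • δ c a⁻¹
  val_inv := by
    rw [Algebra.mul_smul_comm, δ_mul, mul_inv_cancel, smul_smul,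
      inv_mul_cancel₀ (Units.ne_zero _), one_smul, one_eq_δ]
  inv_val := by
    rw [Algebra.smul_mul_assoc, δ_mul, inv_mul_cancel, alpha_inv, smul_smul,
      inv_mul_cancel₀ (Units.ne_zero _), one_smul, one_eq_δ]

variable {c}

theorem tw_semisimple (hcard : (Fintype.card A : k) ≠ 0) : IsSemisimpleRing (Tw c) := by
  refine (isSemisimpleModule_iff _ _).mpr ?_
  constructor
  intro W
  obtain ⟨Wc, hWc⟩ := Submodule.exists_isCompl (W.restrictScalars k)
  set pr : Tw c →ₗ[k] Tw c := (W.restrictScalars k).subtype ∘ₗ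
    (W.restrictScalars k).linearProjOfIsCompl Wc hWc with hpr
  have hprmem : ∀ x, pr x ∈ W := fun x =>
    ((W.restrictScalars k).linearProjOfIsCompl Wc hWc x).2
  have hprfix : ∀ x ∈ W, pr x = x := by
    intro x hx
    have h1 := Submodule.linearProjOfIsCompl_apply_left hWc
      (⟨x, hx⟩ : (W.restrictScalars k))
    simp only [hpr, LinearMap.comp_apply]
    erw [h1]
    rfl
  -- notation for the units
  set v : A → Tw c := fun a => (uu c a : Tw c) with hv
  set w : A → Tw c := fun a => (((uu c a)⁻¹ : (Tw c)ˣ) : Tw c) with hw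
  have hvw : ∀ a, v a * w a = 1 := fun a => (uu c a).mul_inv
  have hwv : ∀ a, w a * v a = 1 := fun a => (uu c a).inv_mul
  have hL1 : ∀ a b, v a * v b = (c.α a b : k) • v (a * b) := fun a b => δ_mul a b
  have hL1' : ∀ a b, v (a * b) = ((c.α a b : k)⁻¹) • (v a * v b) := by
    intro a b
    rw [hL1, smul_smul, inv_mul_cancel₀ (Units.ne_zero _), one_smul]
  have hL3 : ∀ e b, w (e * b) * v e = (c.α e b : k) • w b := by
    intro e b
    have h1 : w (e * b) * v e * v b = (c.α e b : k) • 1 := by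
      rw [mul_assoc, hL1, Algebra.mul_smul_comm, hwv]
    calc w (e * b) * v e = w (e * b) * v e * (v b * w b) := by rw [hvw, mul_one]
    _ = w (e * b) * v e * v b * w b := by rw [mul_assoc (w (e*b) * v e)]
    _ = ((c.α e b : k) • 1) * w b := by rw [h1]
    _ = (c.α e b : k) • w b := by rw [Algebra.smul_mul_assoc, one_mul]
  -- the averaged projection
  set T : Tw c →ₗ[k] Tw c := (Fintype.card A : k)⁻¹ •
    ∑ a : A, (LinearMap.mulLeft k (v a)) ∘ₗ pr ∘ₗ (LinearMap.mulLeft k (w a)) with hT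
  have hTapp : ∀ x, T x = (Fintype.card A : k)⁻¹ • ∑ a : A, v a * pr (w a * x) := by
    intro x
    simp [hT, LinearMap.sum_apply]
  have hWmul : ∀ (b : Tw c) {x : Tw c}, x ∈ W → b * x ∈ W := fun b x hx => by
    simpa [smul_eq_mul] using W.smul_mem b hx
  have hWsmul : ∀ (r : k) {x : Tw c}, x ∈ W → r • x ∈ W := fun r x hx => by
    rw [Algebra.smul_def]; exact hWmul _ hx
  have hTmem : ∀ x, T x ∈ W := by
    intro x
    rw [hTapp]
    exact hWsmul _ (Submodule.sum_mem _ fun a _ => hWmul _ (hprmem _))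
  have hTfix : ∀ x ∈ W, T x = x := by
    intro x hx
    rw [hTapp]
    have h1 : ∀ a : A, v a * pr (w a * x) = x := by
      intro a
      rw [hprfix _ (hWmul _ hx), ← mul_assoc, hvw, one_mul]
    rw [Finset.sum_congr rfl fun a _ => h1 a, Finset.sum_const, Finset.card_univ,
      ← Nat.cast_smul_eq_nsmul k, smul_smul, inv_mul_cancel₀ hcard, one_smul]
  have hTcommδ : ∀ (e : A) (x : Tw c), T (v e * x) = v e * T x := by
    intro e x
    rw [hTapp, hTapp]
    have h1 : ∑ a : A, v a * pr (w a * (v e * x)) =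
        ∑ b : A, v e * (v b * pr (w b * x)) := by
      refine (Fintype.sum_equiv (Equiv.mulLeft e) _ _ ?_).symm
      intro b
      show v e * (v b * pr (w b * x)) = v (e * b) * pr (w (e * b) * (v e * x))
      rw [← mul_assoc (w (e*b)), hL3, Algebra.smul_mul_assoc, map_smul, hL1',
        Algebra.smul_mul_assoc, Algebra.mul_smul_comm, smul_smul,
        inv_mul_cancel₀ (Units.ne_zero _), one_smul, mul_assoc]
    rw [h1, ← Finset.mul_sum, Algebra.mul_smul_comm]
  have hTcomm : ∀ (b x : Tw c), T (b * x) = b * T x := by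
    intro b x
    conv_lhs => rw [eq_sum_δ b]
    conv_rhs => rw [eq_sum_δ b]
    rw [Finset.sum_mul, map_sum, Finset.sum_mul]
    refine Finset.sum_congr rfl fun a _ => ?_
    have hδv : (δ c a : Tw c) = v a := rfl
    rw [Algebra.smul_mul_assoc, map_smul, hδv, hTcommδ, Algebra.smul_mul_assoc]
  let TB : Tw c →ₗ[Tw c] Tw c :=
    { toFun := T
      map_add' := T.map_add
      map_smul' := fun b x => by simpa [smul_eq_mul] using hTcomm b x }
  refine ⟨LinearMap.ker TB, ?_, ?_⟩
  · rw [Submodule.disjoint_def]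
    intro x hxW hxK
    have : T x = 0 := hxK
    rw [← hTfix x hxW, this]
  · rw [codisjoint_iff_le_sup]
    intro x _
    refine Submodule.mem_sup.mpr ⟨T x, hTmem x, x - T x, ?_, by abel⟩
    show T (x - T x) = 0
    rw [map_sub, hTfix (T x) (hTmem x), sub_self]

end Tw

end Twisted


/-- Let `N ⊴ G` of finite index, `k` algebraically closed with characteristic not dividing
`[G : N]`, and `L = (V, ρ)` an irreducible finite-dimensional `N`-representation whose
stabilizer is all of `G`, with isomorphisms `θ_a : L ≅ {}^{ι a}L` and associated
normalized 2-cocycle `α`.  Then the twisted group algebra `𝒜 ≅ End_G(Ind_N^G L)^op`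
(realized as the twisted convolution product on `A → k`) is a semisimple `k`-algebra — in
fact isomorphic to a finite product of matrix algebras over `k`. -/
theorem twisted_group_algebra_semisimple {k G V : Type*} [Field k] [IsAlgClosed k]
    [Group G] [AddCommGroup V] [Module k V] [FiniteDimensional k V]
    (N : Subgroup G) [hN : N.Normal] [Fintype (G ⧸ N)] [DecidableEq (G ⧸ N)]
    (hchar : ¬ (ringChar k ∣ Nat.card (G ⧸ N)))
    (ρ : Representation k N V) (hirr : repIrreducible ρ)
    (ι : G ⧸ N → G) (hι : ∀ a, QuotientGroup.mk' N (ι a) = a) (hι1 : ι 1 = 1)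
    (θ : G ⧸ N → (V ≃ₗ[k] V)) (hθ1 : θ 1 = LinearEquiv.refl k V)
    (hθ : ∀ (a : G ⧸ N) (n : N) (v : V),
      θ a (ρ n v) =
        ρ ⟨(ι a)⁻¹ * ↑n * ι a, by simpa using hN.conj_mem _ n.2 (ι a)⁻¹⟩ (θ a v))
    (α : G ⧸ N → G ⧸ N → kˣ)
    (hα : ∀ (a b : G ⧸ N) (v : V),
      ρ ⟨(ι (a * b))⁻¹ * ι a * ι b, by
          rw [← QuotientGroup.eq_one_iff]
          show (QuotientGroup.mk' N) ((ι (a * b))⁻¹ * ι a * ι b) = 1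
          simp only [map_mul, map_inv, hι]
          group⟩
        (θ b (θ a v)) = (α a b : k) • θ (a * b) v)
    (mulA : ((G ⧸ N) → k) → ((G ⧸ N) → k) → ((G ⧸ N) → k))
    (hmulA : ∀ x y c, mulA x y c = ∑ a : G ⧸ N, (α a (a⁻¹ * c) : k) * x a * y (a⁻¹ * c)) :
    ∃ (r : ℕ) (n : Fin r → ℕ)
      (e : ((G ⧸ N) → k) ≃ₗ[k] (Π i : Fin r, Matrix (Fin (n i)) (Fin (n i)) k)),
      (∀ x y, e (mulA x y) = e x * e y) ∧
      e (fun c => if c = 1 then 1 else 0) = 1 := by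
  
  classical
  -- a nonzero vector
  obtain ⟨v0, hv0⟩ := @exists_ne V hirr.1 0
  have hθne : ∀ (t : G ⧸ N), θ t v0 ≠ 0 := fun t h =>
    hv0 ((θ t).map_eq_zero_iff.mp h)
  have hcancel : ∀ (s t : k) (x : V), x ≠ 0 → s • x = t • x → s = t := by
    intro s t x hx h
    have h0 : (s - t) • x = 0 := by rw [sub_smul, h, sub_self]
    rcases smul_eq_zero.mp h0 with h' | h'
    · exact sub_eq_zero.mp h'
    · exact absurd h' hx
  -- membership lemmas and clean restatements
  have hmem : ∀ x y : G ⧸ N, (ι (x * y))⁻¹ * ι x * ι y ∈ N := by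
    intro x y
    rw [← QuotientGroup.eq_one_iff]
    show (QuotientGroup.mk' N) ((ι (x * y))⁻¹ * ι x * ι y) = 1
    simp only [map_mul, map_inv, hι]
    group
  have hmem2 : ∀ (t : G ⧸ N) (n : ↥N), (ι t)⁻¹ * ↑n * ι t ∈ N := fun t n => by
    simpa using hN.conj_mem _ n.2 (ι t)⁻¹
  let na : G ⧸ N → G ⧸ N → ↥N := fun x y => ⟨(ι (x * y))⁻¹ * ι x * ι y, hmem x y⟩
  have haux : ∀ (x y : G ⧸ N) (v : V),
      ρ (na x y) (θ y (θ x v)) = (α x y : k) • θ (x * y) v := fun x y v => hα x y v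
  have hθ' : ∀ (t : G ⧸ N) (n : ↥N) (v : V),
      θ t (ρ n v) = ρ ⟨(ι t)⁻¹ * ↑n * ι t, hmem2 t n⟩ (θ t v) := fun t n v => hθ t n v
  have hρmul : ∀ (n m : ↥N) (w : V), ρ (n * m) w = ρ n (ρ m w) := by
    intro n m w; rw [map_mul]; rfl
  -- normalization
  have hone_left : ∀ b : G ⧸ N, α 1 b = 1 := by
    intro b
    have h := haux 1 b v0
    have hg : ((na 1 b : ↥N) : G) = 1 := by
      show (ι ((1 : G ⧸ N) * b))⁻¹ * ι 1 * ι b = 1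
      rw [one_mul, hι1]
      group
    have hna : na 1 b = 1 := Subtype.ext hg
    rw [hna, map_one] at h
    have h1 : θ b (θ 1 v0) = θ b v0 := by rw [hθ1]; rfl
    have h2 : θ b v0 = θ ((1 : G ⧸ N) * b) v0 := by rw [one_mul]
    rw [Module.End.one_apply, h1, h2] at h
    have := hcancel 1 (α 1 b : k) (θ ((1 : G ⧸ N) * b) v0) (hθne _) (by rw [one_smul]; exact h)
    exact Units.ext this.symm
  have hone_right : ∀ a : G ⧸ N, α a 1 = 1 := by
    intro a
    have h := haux a 1 v0
    have hg : ((na a 1 : ↥N) : G) = 1 := by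
      show (ι (a * (1 : G ⧸ N)))⁻¹ * ι a * ι 1 = 1
      rw [mul_one, hι1]
      group
    have hna : na a 1 = 1 := Subtype.ext hg
    rw [hna, map_one] at h
    have h1 : θ 1 (θ a v0) = θ a v0 := by rw [hθ1]; rfl
    have h2 : θ a v0 = θ (a * (1 : G ⧸ N)) v0 := by rw [mul_one]
    rw [Module.End.one_apply, h1, h2] at h
    have := hcancel 1 (α a 1 : k) (θ (a * (1 : G ⧸ N)) v0) (hθne _) (by rw [one_smul]; exact h)
    exact Units.ext this.symm
  -- cocycle identity
  have hcoc : ∀ a b d : G ⧸ N, α a b * α (a * b) d = α b d * α a (b * d) := by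
    intro a b d
    have E1 : ρ (na (a * b) d) (θ d (ρ (na a b) (θ b (θ a v0)))) =
        (α a b : k) • ((α (a * b) d : k) • θ (a * b * d) v0) := by
      rw [haux a b v0, map_smul, map_smul, haux (a * b) d v0]
    have E2 : ρ (na (a * b) d) (θ d (ρ (na a b) (θ b (θ a v0)))) =
        ρ (na (a * b) d * ⟨(ι d)⁻¹ * ↑(na a b) * ι d, hmem2 d (na a b)⟩)
          (θ d (θ b (θ a v0))) := by
      rw [hθ' d (na a b), hρmul]
    have E3 : ρ (na a (b * d)) (ρ (na b d) (θ d (θ b (θ a v0)))) =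
        (α b d : k) • ((α a (b * d) : k) • θ (a * (b * d)) v0) := by
      rw [haux b d (θ a v0), map_smul, haux a (b * d) v0]
    have E4 : na (a * b) d * ⟨(ι d)⁻¹ * ↑(na a b) * ι d, hmem2 d (na a b)⟩ =
        na a (b * d) * na b d := by
      apply Subtype.ext
      show ((ι (a * b * d))⁻¹ * ι (a * b) * ι d) * ((ι d)⁻¹ * ((ι (a * b))⁻¹ * ι a * ι b) * ι d)
        = ((ι (a * (b * d)))⁻¹ * ι a * ι (b * d)) * ((ι (b * d))⁻¹ * ι b * ι d)
      rw [mul_assoc a b d]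
      group
    have key : (α a b : k) • ((α (a * b) d : k) • θ (a * b * d) v0) =
        (α b d : k) • ((α a (b * d) : k) • θ (a * (b * d)) v0) := by
      rw [← E1, ← E3, E2, E4, hρmul]
    rw [← mul_assoc a b d] at key
    rw [smul_smul, smul_smul] at key
    have := hcancel _ _ _ (hθne (a * b * d)) key
    apply Units.ext
    rw [Units.val_mul, Units.val_mul]
    exact this
  -- assemble the twisted group algebra
  let c0 : NCocycle k (G ⧸ N) := ⟨α, hcoc, hone_left, hone_right⟩
  have hcard : ((Fintype.card (G ⧸ N) : ℕ) : k) ≠ 0 := by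
    intro h
    apply hchar
    rw [Nat.card_eq_fintype_card]
    haveI := ringChar.charP k
    exact (CharP.cast_eq_zero_iff k (ringChar k) _).mp h
  haveI : IsSemisimpleRing (Tw c0) := Tw.tw_semisimple hcard
  obtain ⟨r, n, ⟨E⟩⟩ := @wedderburn_algClosed k (Tw c0) _ _ _ _
    (inferInstanceAs (FiniteDimensional k (G ⧸ N → k))) _
  let e0 : ((G ⧸ N) → k) ≃ₗ[k] Tw c0 :=
    { toFun := fun x => x
      invFun := fun x => x
      map_add' := fun _ _ => rfl
      map_smul' := fun _ _ => rfl
      left_inv := fun _ => rfl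
      right_inv := fun _ => rfl }
  refine ⟨r, n, e0.trans E.toLinearEquiv, ?_, ?_⟩
  · intro x y
    have hm : (e0 (mulA x y) : Tw c0) = (e0 x) * (e0 y) := by
      funext d
      rw [show (e0 (mulA x y) : Tw c0) d = mulA x y d from rfl, hmulA x y d]
      rfl
    show E (e0 (mulA x y)) = E (e0 x) * E (e0 y)
    rw [hm, map_mul]
  · show E (e0 (fun c => if c = 1 then 1 else 0)) = 1
    have h1 : (e0 (fun c => if c = 1 then 1 else 0) : Tw c0) = 1 := rfl
    rw [h1, map_one]
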